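/- For real a with 0 ≤ a < 1 and λ ∈ [0, 1), the function Δ(a,λ) = I(a, a−λ+1, λ) − I(a, a+λ−1, λ) (case λ > a) satisfies Δ(0,λ) = 0 and ∂Δ/∂a = (1/2)·log((1−a²)/((2−λ)²−a²)) ≤ 0; hence Δ(a,λ) ≤ 0 for all a ≥ 0. -/

import Mathlib

noncomputable section

def p00 (a b lam : ℝ) : ℝ := (1 + a + b + lam) / 4
def p01 (a b lam : ℝ) : ℝ := (1 + a - b - lam) / 4
def p10 (a b lam : ℝ) : ℝ := (1 - a + b - lam) / 4
def p11 (a b lam : ℝ) : ℝ := (1 - a - b + lam) / 4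

def pX0 (a : ℝ) : ℝ := (1 + a) / 2
def pX1 (a : ℝ) : ℝ := (1 - a) / 2
def pY0 (b : ℝ) : ℝ := (1 + b) / 2
def pY1 (b : ℝ) : ℝ := (1 - b) / 2

/-- Mutual information of the binary joint distribution `p(a,b,λ)` (natural log). -/
def MI (a b lam : ℝ) : ℝ :=
    p00 a b lam * Real.log (p00 a b lam / (pX0 a * pY0 b))
  + p01 a b lam * Real.log (p01 a b lam / (pX0 a * pY1 b))
  + p10 a b lam * Real.log (p10 a b lam / (pX1 a * pY0 b))
  + p11 a b lam * Real.log (p11 a b lam / (pX1 a * pY1 b))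

/-- `Δ(a,λ) = I(a, a−λ+1, λ) − I(a, a+λ−1, λ)` (case `λ > a`). -/
def Delta2 (a lam : ℝ) : ℝ := MI a (a - lam + 1) lam - MI a (a + lam - 1) lam

/-- Closed form of `Delta2`. -/
def Faux (lam t : ℝ) : ℝ :=
    (1 + t) / 2 * Real.log (1 + t) - (1 - t) / 2 * Real.log (1 - t)
  + (2 - lam - t) / 2 * Real.log (2 - lam - t)
  - (2 - lam + t) / 2 * Real.log (2 - lam + t)

lemma hFeq {lam t : ℝ} (h1 : -lam < t) (h2 : t < lam) (hl' : lam < 1) :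
    Delta2 t lam = Faux lam t := by
  have h1t : (0:ℝ) < 1 + t := by linarith
  have h2t : (0:ℝ) < 1 - t := by linarith
  have h3t : (0:ℝ) < 2 - lam + t := by linarith
  have h4t : (0:ℝ) < 2 - lam - t := by linarith
  have h5t : (0:ℝ) < lam - t := by linarith
  have h6t : (0:ℝ) < 1 - lam := by linarith
  have h7t : (0:ℝ) < t + lam := by linarith
  have c1 : p00 t (t - lam + 1) lam = (1 + t) / 2 := by unfold p00; ring
  have c2 : p01 t (t - lam + 1) lam = 0 := by unfold p01; ring
  have c3 : p10 t (t - lam + 1) lam = (1 - lam) / 2 := by unfold p10; ring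
  have c4 : p11 t (t - lam + 1) lam = (lam - t) / 2 := by unfold p11; ring
  have d1 : p00 t (t + lam - 1) lam = (t + lam) / 2 := by unfold p00; ring
  have d2 : p01 t (t + lam - 1) lam = (1 - lam) / 2 := by unfold p01; ring
  have d3 : p10 t (t + lam - 1) lam = 0 := by unfold p10; ring
  have d4 : p11 t (t + lam - 1) lam = (1 - t) / 2 := by unfold p11; ring
  have r1 : p00 t (t - lam + 1) lam / (pX0 t * pY0 (t - lam + 1)) = 2 / (2 - lam + t) := by
    rw [c1]; unfold pX0 pY0
    rw [div_eq_div_iff (by nlinarith) h3t.ne']; ring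
  have r3 : p10 t (t - lam + 1) lam / (pX1 t * pY0 (t - lam + 1))
      = 2 * (1 - lam) / ((1 - t) * (2 - lam + t)) := by
    rw [c3]; unfold pX1 pY0
    rw [div_eq_div_iff (by nlinarith) (by nlinarith)]; ring
  have r4 : p11 t (t - lam + 1) lam / (pX1 t * pY1 (t - lam + 1)) = 2 / (1 - t) := by
    rw [c4]; unfold pX1 pY1
    rw [div_eq_div_iff (by nlinarith) h2t.ne']; ring
  have s1 : p00 t (t + lam - 1) lam / (pX0 t * pY0 (t + lam - 1)) = 2 / (1 + t) := by
    rw [d1]; unfold pX0 pY0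
    rw [div_eq_div_iff (by nlinarith) h1t.ne']; ring
  have s2 : p01 t (t + lam - 1) lam / (pX0 t * pY1 (t + lam - 1))
      = 2 * (1 - lam) / ((1 + t) * (2 - lam - t)) := by
    rw [d2]; unfold pX0 pY1
    rw [div_eq_div_iff (by nlinarith) (by nlinarith)]; ring
  have s4 : p11 t (t + lam - 1) lam / (pX1 t * pY1 (t + lam - 1)) = 2 / (2 - lam - t) := by
    rw [d4]; unfold pX1 pY1
    rw [div_eq_div_iff (by nlinarith) h4t.ne']; ring
  have two_ne : (2:ℝ) ≠ 0 := two_ne_zero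
  have L1 : Real.log (2 / (2 - lam + t)) = Real.log 2 - Real.log (2 - lam + t) :=
    Real.log_div two_ne h3t.ne'
  have L2 : Real.log (2 / (1 - t)) = Real.log 2 - Real.log (1 - t) :=
    Real.log_div two_ne h2t.ne'
  have L3 : Real.log (2 / (1 + t)) = Real.log 2 - Real.log (1 + t) :=
    Real.log_div two_ne h1t.ne'
  have L4 : Real.log (2 / (2 - lam - t)) = Real.log 2 - Real.log (2 - lam - t) :=
    Real.log_div two_ne h4t.ne'
  have L5 : Real.log (2 * (1 - lam) / ((1 - t) * (2 - lam + t)))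
      = Real.log 2 + Real.log (1 - lam) - (Real.log (1 - t) + Real.log (2 - lam + t)) := by
    rw [Real.log_div (mul_pos two_pos h6t).ne' (mul_pos h2t h3t).ne',
      Real.log_mul two_ne h6t.ne', Real.log_mul h2t.ne' h3t.ne']
  have L6 : Real.log (2 * (1 - lam) / ((1 + t) * (2 - lam - t)))
      = Real.log 2 + Real.log (1 - lam) - (Real.log (1 + t) + Real.log (2 - lam - t)) := by
    rw [Real.log_div (mul_pos two_pos h6t).ne' (mul_pos h1t h4t).ne',
      Real.log_mul two_ne h6t.ne', Real.log_mul h1t.ne' h4t.ne']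
  unfold Delta2 MI
  rw [r1, r3, r4, s1, s2, s4, c1, c2, c3, c4, d1, d2, d3, d4, L1, L2, L3, L4, L5, L6]
  unfold Faux
  ring

lemma hasDerivAt_Faux (lam t : ℝ) (h1 : (0:ℝ) < 1 + t) (h2 : (0:ℝ) < 1 - t)
    (h3 : (0:ℝ) < 2 - lam - t) (h4 : (0:ℝ) < 2 - lam + t) :
    HasDerivAt (Faux lam)
      ((1 / 2) * Real.log ((1 - t ^ 2) / ((2 - lam) ^ 2 - t ^ 2))) t := by
  have l1 : HasDerivAt (fun s : ℝ => Real.log (1 + s)) (1 / (1 + t)) t := by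
    simpa using ((hasDerivAt_id' t).const_add 1).log h1.ne'
  have l2 : HasDerivAt (fun s : ℝ => Real.log (1 - s)) (-(1 / (1 - t))) t := by
    have := ((hasDerivAt_id' t).const_sub 1).log h2.ne'
    simpa [neg_div] using this
  have l3 : HasDerivAt (fun s : ℝ => Real.log (2 - lam - s)) (-(1 / (2 - lam - t))) t := by
    have := ((hasDerivAt_id' t).const_sub (2 - lam)).log h3.ne'
    simpa [neg_div] using this
  have l4 : HasDerivAt (fun s : ℝ => Real.log (2 - lam + s)) (1 / (2 - lam + t)) t := by
    simpa using ((hasDerivAt_id' t).const_add (2 - lam)).log h4.ne'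
  have P1 : HasDerivAt (fun s : ℝ => (1 + s) / 2 * Real.log (1 + s))
      ((1 / 2) * Real.log (1 + t) + (1 + t) / 2 * (1 / (1 + t))) t := by
    have h := (((hasDerivAt_id' t).const_add 1).div_const 2).mul l1
    simp only [one_div, mul_neg, neg_div] at h ⊢
    exact h
  have P2 : HasDerivAt (fun s : ℝ => (1 - s) / 2 * Real.log (1 - s))
      (-1 / 2 * Real.log (1 - t) + -((1 - t) / 2 * (1 - t)⁻¹)) t := by
    have h := (((hasDerivAt_id' t).const_sub 1).div_const 2).mul l2
    simp only [one_div, mul_neg, neg_div] at h ⊢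
    exact h
  have P3 : HasDerivAt (fun s : ℝ => (2 - lam - s) / 2 * Real.log (2 - lam - s))
      (-1 / 2 * Real.log (2 - lam - t) + -((2 - lam - t) / 2 * (2 - lam - t)⁻¹)) t := by
    have h := (((hasDerivAt_id' t).const_sub (2 - lam)).div_const 2).mul l3
    simp only [one_div, mul_neg, neg_div] at h ⊢
    exact h
  have P4 : HasDerivAt (fun s : ℝ => (2 - lam + s) / 2 * Real.log (2 - lam + s))
      ((1 / 2) * Real.log (2 - lam + t) + (2 - lam + t) / 2 * (1 / (2 - lam + t))) t := by
    have h := (((hasDerivAt_id' t).const_add (2 - lam)).div_const 2).mul l4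
    simp only [one_div, mul_neg, neg_div] at h ⊢
    exact h
  have P := ((P1.sub P2).add P3).sub P4
  have harg : (1 - t ^ 2) / ((2 - lam) ^ 2 - t ^ 2)
      = ((1 + t) * (1 - t)) / ((2 - lam - t) * (2 - lam + t)) := by
    rw [div_eq_div_iff (by nlinarith) (by nlinarith)]; ring
  refine P.congr_deriv ?_
  symm
  rw [harg, Real.log_div (by positivity) (by positivity),
    Real.log_mul h1.ne' h2.ne', Real.log_mul h3.ne' h4.ne']
  field_simp
  ring

theorem boundary_max_b_case_lam_gt_a (a lam : ℝ) (ha : 0 ≤ a) (ha' : a < 1)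
    (hl : 0 ≤ lam) (hl' : lam < 1) (hal : a < lam) :
    Delta2 0 lam = 0 ∧
    deriv (fun t => Delta2 t lam) a
      = (1 / 2) * Real.log ((1 - a ^ 2) / ((2 - lam) ^ 2 - a ^ 2)) ∧
    deriv (fun t => Delta2 t lam) a ≤ 0 ∧
    Delta2 a lam ≤ 0 := by
  have hlam0 : 0 < lam := lt_of_le_of_lt ha hal
  have hF0 : Faux lam 0 = 0 := by
    unfold Faux; norm_num
  have part1 : Delta2 0 lam = 0 := by
    rw [hFeq (by linarith) hlam0 hl', hF0]
  have hev : (fun t => Delta2 t lam) =ᶠ[nhds a] Faux lam := by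
    filter_upwards [Ioo_mem_nhds (by linarith : -lam < a) hal] with x hx
    exact hFeq hx.1 hx.2 hl'
  have hD : ∀ t : ℝ, -lam < t → t < lam →
      HasDerivAt (Faux lam) ((1 / 2) * Real.log ((1 - t ^ 2) / ((2 - lam) ^ 2 - t ^ 2))) t :=
    fun t h1 h2 => hasDerivAt_Faux lam t (by linarith) (by linarith) (by linarith) (by linarith)
  have hnp : ∀ t : ℝ, -lam < t → t < lam →
      (1 / 2) * Real.log ((1 - t ^ 2) / ((2 - lam) ^ 2 - t ^ 2)) ≤ 0 := by
    intro t h1 h2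
    have ht1 : t ^ 2 < 1 := by nlinarith
    have h5 : (0:ℝ) < (2 - lam) ^ 2 - t ^ 2 := by nlinarith
    have hle : (1 - t ^ 2) / ((2 - lam) ^ 2 - t ^ 2) ≤ 1 := by
      rw [div_le_one h5]; nlinarith
    have hnn : (0:ℝ) ≤ (1 - t ^ 2) / ((2 - lam) ^ 2 - t ^ 2) :=
      div_nonneg (by nlinarith) h5.le
    have := Real.log_nonpos hnn hle
    linarith
  have part2 : deriv (fun t => Delta2 t lam) a
      = (1 / 2) * Real.log ((1 - a ^ 2) / ((2 - lam) ^ 2 - a ^ 2)) := by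
    rw [hev.deriv_eq]
    exact (hD a (by linarith) hal).deriv
  have part3 : deriv (fun t => Delta2 t lam) a ≤ 0 := by
    rw [part2]; exact hnp a (by linarith) hal
  have part4 : Delta2 a lam ≤ 0 := by
    have hanti : AntitoneOn (Faux lam) (Set.Icc 0 a) := by
      apply antitoneOn_of_deriv_nonpos (convex_Icc 0 a)
      · intro x hx
        exact ((hD x (by linarith [hx.1]) (by linarith [hx.2])).continuousAt).continuousWithinAt
      · intro x hx
        rw [interior_Icc] at hx
        exact ((hD x (by linarith [hx.1]) (by linarith [hx.2])).differentiableAt).differentiableWithinAt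
      · intro x hx
        rw [interior_Icc] at hx
        rw [(hD x (by linarith [hx.1]) (by linarith [hx.2])).deriv]
        exact hnp x (by linarith [hx.1]) (by linarith [hx.2])
    have h0m : (0:ℝ) ∈ Set.Icc 0 a := ⟨le_refl 0, ha⟩
    have ham : a ∈ Set.Icc 0 a := ⟨ha, le_refl a⟩
    have := hanti h0m ham ha
    rw [hF0] at this
    rw [hFeq (by linarith) hal hl']
    exact this
  exact ⟨part1, part2, part3, part4⟩
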